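/- Given a mixed graph G=(V,D,B), a node v∈V and a subset of allowed nodes A⊆V∖({v}∪sib(v)), there exists a set Y⊆A satisfying the half-trek criterion with respect to v if and only if the maximum number of directed paths from s to t in the flow network G_flow(v,A) that are pairwise vertex-disjoint except at the common endpoints s and t equals |pa(v)|. -/

import Mathlib

open scoped Classical Matrix

/-- A mixed graph `G = (V, D, B)`: a finite vertex set `V`, a set `D` of directed
edges, and a symmetric set `B` of bidirected edges; no self-loops. -/
structure MixedGraph (V : Type*) [Fintype V] [DecidableEq V] where
  D : Finset (V × V)
  B : Finset (V × V)
  B_symm : ∀ v w : V, (v, w) ∈ B → (w, v) ∈ B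
  D_irrefl : ∀ v : V, (v, v) ∉ D
  B_irrefl : ∀ v : V, (v, v) ∉ B

namespace MixedGraph

variable {V : Type*} [Fintype V] [DecidableEq V]

/-- The parents of `v`: nodes `w` with `w → v ∈ D`. -/
def pa (G : MixedGraph V) (v : V) : Finset V :=
  Finset.univ.filter fun w => (w, v) ∈ G.D

/-- The siblings of `v`: nodes `w` with `w ↔ v ∈ B`. -/
def sib (G : MixedGraph V) (v : V) : Finset V :=
  Finset.univ.filter fun w => (w, v) ∈ G.B

/-- A trek: a walk with no colliding arrowheads.  The field `left` lists the nodes of the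
left-hand side from top (head) to source (last); `right` lists the nodes of the right-hand
side from top (head) to target (last); consecutive nodes in each list are joined by directed
edges pointing away from the head.  If `hasBidir` then the two heads are joined by a
bidirected edge, otherwise they coincide (the top node). -/
structure Trek (G : MixedGraph V) where
  left : List V
  right : List V
  left_ne : left ≠ []
  right_ne : right ≠ []
  hasBidir : Bool
  left_chain : left.Chain' fun a b => (a, b) ∈ G.D
  right_chain : right.Chain' fun a b => (a, b) ∈ G.D
  head_cond : if hasBidir then (left.head left_ne, right.head right_ne) ∈ G.B
              else left.head left_ne = right.head right_ne

namespace Trek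

variable {G : MixedGraph V}

/-- The source of a trek. -/
def source (π : G.Trek) : V := π.left.getLast π.left_ne

/-- The target of a trek. -/
def target (π : G.Trek) : V := π.right.getLast π.right_ne

/-- The left-hand side `Left(π)` of a trek, as a set of nodes. -/
def leftSet (π : G.Trek) : Finset V := π.left.toFinset

/-- The right-hand side `Right(π)` of a trek, as a set of nodes. -/
def rightSet (π : G.Trek) : Finset V := π.right.toFinset

/-- A half-trek is a trek whose left-hand side consists of exactly one node. -/
def IsHalfTrek (π : G.Trek) : Prop := π.leftSet.card = 1

/-- The number of directed edges traversed by the trek. -/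
def nEdges (π : G.Trek) : ℕ := (π.left.length - 1) + (π.right.length - 1)

end Trek

/-- `htr v`: the set of nodes `w ∉ {v} ∪ sib(v)` reachable from `v` by a half-trek
containing at least one directed edge. -/
def htr (G : MixedGraph V) (v : V) : Set V :=
  {w | w ≠ v ∧ w ∉ G.sib v ∧
    ∃ π : G.Trek, π.source = v ∧ π.target = w ∧ π.IsHalfTrek ∧ 1 ≤ π.nEdges}

/-- `f` encodes a system of treks from `Y` to `P`: treks with pairwise distinct sources
forming `Y` and pairwise distinct targets forming `P`. -/
def IsTrekSystem (G : MixedGraph V) (Y P : Finset V) (f : V → G.Trek) : Prop :=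
  (∀ y ∈ Y, (f y).source = y) ∧
  (Y.image fun y => (f y).target) = P ∧
  ∀ y ∈ Y, ∀ y' ∈ Y, y ≠ y' → (f y).target ≠ (f y').target

/-- The treks `f y`, `y ∈ Y`, have no sided intersection. -/
def NoSidedIntersection (G : MixedGraph V) (Y : Finset V) (f : V → G.Trek) : Prop :=
  ∀ y ∈ Y, ∀ y' ∈ Y, y ≠ y' →
    Disjoint (f y).leftSet (f y').leftSet ∧ Disjoint (f y).rightSet (f y').rightSet

/-- `Y` satisfies the half-trek criterion with respect to `v`. -/
def SatisfiesHTC (G : MixedGraph V) (v : V) (Y : Finset V) : Prop :=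
  Y.card = (G.pa v).card ∧
  (∀ y ∈ Y, y ≠ v ∧ y ∉ G.sib v) ∧
  ∃ f : V → G.Trek, (∀ y ∈ Y, (f y).IsHalfTrek) ∧
    G.IsTrekSystem Y (G.pa v) f ∧ G.NoSidedIntersection Y f

/-- `Y` satisfies the weak half-trek criterion with respect to `v`. -/
def SatisfiesWeakHTC (G : MixedGraph V) (v : V) (Y : Finset V) : Prop :=
  Y.card = (G.pa v).card ∧
  (∀ y ∈ Y, y ≠ v ∧ y ∉ G.sib v) ∧
  ∃ f : V → G.Trek, (∀ y ∈ Y, y ∈ G.htr v → (f y).IsHalfTrek) ∧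
    G.IsTrekSystem Y (G.pa v) f ∧ G.NoSidedIntersection Y f

/-- `G` is HTC-identifiable. -/
def HTCIdentifiable (G : MixedGraph V) : Prop :=
  ∃ Y : V → Finset V,
    (∀ v, G.SatisfiesHTC v (Y v)) ∧
    ∃ r : V → V → Prop, IsStrictTotalOrder V r ∧
      ∀ v w, w ∈ Y v → w ∈ G.htr v → r w v

/-- `G` is HTC-infinite-to-one. -/
def HTCInfiniteToOne (G : MixedGraph V) : Prop :=
  ∀ Y : V → Finset V,
    (∃ v, ¬ G.SatisfiesHTC v (Y v)) ∨ ∃ v w, v ∈ Y w ∧ w ∈ Y v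

/-- `G` is acyclic: no directed cycle can be formed from the edges in `D`. -/
def Acyclic (G : MixedGraph V) : Prop :=
  ∀ v : V, ¬ Relation.TransGen (fun a b => (a, b) ∈ G.D) v v

/-- `G` is simple: at most one edge between any pair of nodes. -/
def Simple (G : MixedGraph V) : Prop :=
  (∀ e ∈ G.D, e ∉ G.B) ∧ ∀ v w : V, (v, w) ∈ G.D → (w, v) ∉ G.D

/-- `ℝ^D_reg`: real matrices supported on `D` with `I - Λ` invertible. -/
def RDreg (G : MixedGraph V) : Set (Matrix V V ℝ) :=
  {Λ | (∀ v w, (v, w) ∉ G.D → Λ v w = 0) ∧ IsUnit (1 - Λ).det}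

/-- `PD(B)`: positive definite symmetric matrices supported on the diagonal and `B`. -/
def PDB (G : MixedGraph V) : Set (Matrix V V ℝ) :=
  {Ω | Ω.PosDef ∧ ∀ v w, v ≠ w → (v, w) ∉ G.B → Ω v w = 0}

/-- The parameter space `Θ = ℝ^D_reg × PD(B)`. -/
def Theta (G : MixedGraph V) : Set (Matrix V V ℝ × Matrix V V ℝ) :=
  {θ | θ.1 ∈ G.RDreg ∧ θ.2 ∈ G.PDB}

/-- The parametrization `φ(Λ, Ω) = (I-Λ)^{-T} Ω (I-Λ)^{-1}`. -/
noncomputable def phi {R : Type*} [CommRing R] (Λ Ω : Matrix V V R) : Matrix V V R :=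
  ((1 - Λ)⁻¹)ᵀ * Ω * (1 - Λ)⁻¹

/-- Evaluation of a polynomial in the coordinates `λ_vw` (left summand) and `ω_vw`
(right summand) at a parameter point `θ = (Λ, Ω)`. -/
noncomputable def evalParam (θ : Matrix V V ℝ × Matrix V V ℝ)
    (p : MvPolynomial ((V × V) ⊕ (V × V)) ℝ) : ℝ :=
  MvPolynomial.eval (Sum.elim (fun e => θ.1 e.1 e.2) (fun e => θ.2 e.1 e.2)) p

/-- `V₀` is a proper algebraic subset of `Θ`: the intersection with `Θ` of the zero set of a
polynomial in the coordinates that does not vanish identically on `Θ`. -/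
def IsProperAlgebraic (G : MixedGraph V)
    (V₀ : Set (Matrix V V ℝ × Matrix V V ℝ)) : Prop :=
  ∃ p : MvPolynomial ((V × V) ⊕ (V × V)) ℝ,
    (∃ θ ∈ G.Theta, evalParam θ p ≠ 0) ∧
    V₀ = {θ ∈ G.Theta | evalParam θ p = 0}

/-- Evaluation of a polynomial in the entries of a covariance matrix. -/
noncomputable def evalAtCov (S : Matrix V V ℝ) (p : MvPolynomial (V × V) ℝ) : ℝ :=
  MvPolynomial.eval (fun e => S e.1 e.2) p

/-- `G` is rationally identifiable: some rational map `ψ` (each coordinate a quotient of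
polynomials in the entries of the covariance matrix) satisfies `ψ ∘ φ_G = id` off a proper
algebraic subset of `Θ`. -/
def RationallyIdentifiable (G : MixedGraph V) : Prop :=
  ∃ V₀, G.IsProperAlgebraic V₀ ∧
    ∃ p q : ((V × V) ⊕ (V × V)) → MvPolynomial (V × V) ℝ,
      ∀ θ ∈ G.Theta \ V₀,
        (∀ i, evalAtCov (phi θ.1 θ.2) (q i) ≠ 0) ∧
        (∀ v w : V, θ.1 v w * evalAtCov (phi θ.1 θ.2) (q (Sum.inl (v, w)))
            = evalAtCov (phi θ.1 θ.2) (p (Sum.inl (v, w)))) ∧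
        (∀ v w : V, θ.2 v w * evalAtCov (phi θ.1 θ.2) (q (Sum.inr (v, w)))
            = evalAtCov (phi θ.1 θ.2) (p (Sum.inr (v, w))))

/-- `G` is generically identifiable: `φ_G` is injective off a proper algebraic subset. -/
def GenericallyIdentifiable (G : MixedGraph V) : Prop :=
  ∃ V₀, G.IsProperAlgebraic V₀ ∧
    Set.InjOn (fun θ : Matrix V V ℝ × Matrix V V ℝ => phi θ.1 θ.2) (G.Theta \ V₀)

/-- `φ_G` is generically infinite-to-one. -/
def GenInfiniteToOne (G : MixedGraph V) : Prop :=
  ∃ V₀, G.IsProperAlgebraic V₀ ∧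
    ∀ θ ∈ G.Theta \ V₀,
      {θ' ∈ G.Theta | phi θ'.1 θ'.2 = phi θ.1 θ.2}.Infinite

end MixedGraph

/-- There exist `k` directed paths from `s` to `t` in the network with edge relation `E`
that are pairwise vertex-disjoint except at the common endpoints `s` and `t` (each path
being simple). -/
def HasDisjointPaths {N : Type*} (E : N → N → Prop) (s t : N) (k : ℕ) : Prop :=
  ∃ P : Fin k → List N,
    (∀ i, (P i).Chain' E ∧ (P i).head? = some s ∧ (P i).getLast? = some t ∧
      2 ≤ (P i).length ∧ (P i).Nodup) ∧
    ∀ i j, i ≠ j → ∀ x ∈ ((P i).drop 1).dropLast, x ∉ ((P j).drop 1).dropLast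

/-- Nodes of the flow network `G_flow(v, A)`: a source, a sink, a left-hand copy `L a`
for each `a ∈ A`, and a right-hand copy `R w` for each `w ∈ V`. -/
inductive FlowNode1 (V : Type*) where
  | s : FlowNode1 V
  | t : FlowNode1 V
  | L : V → FlowNode1 V
  | R : V → FlowNode1 V

/-- Edges of the flow network `G_flow(v, A)`. -/
def flowEdge1 {V : Type*} [Fintype V] [DecidableEq V] (G : MixedGraph V) (v : V)
    (A : Finset V) : FlowNode1 V → FlowNode1 V → Prop
  | FlowNode1.s, FlowNode1.L a => a ∈ A
  | FlowNode1.L a, FlowNode1.R w => a ∈ A ∧ (w = a ∨ (a, w) ∈ G.B)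
  | FlowNode1.R w, FlowNode1.R u => (w, u) ∈ G.D
  | FlowNode1.R w, FlowNode1.t => w ∈ G.pa v
  | _, _ => False


private lemma exists_nodup_chain' {α : Type*} {D : α → α → Prop} :
    ∀ (n : ℕ) (l : List α), l.length ≤ n → l.Chain' D → ∀ x, l.head? = some x →
      ∃ l' : List α, l'.Nodup ∧ l'.Chain' D ∧ l'.head? = some x ∧
        l'.getLast? = l.getLast? ∧ ∀ u ∈ l', u ∈ l := by
  intro n
  induction n with
  | zero => intro l hl _ x hx; cases l <;> simp_all
  | succ n IH =>
    intro l hl hc x hx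
    rcases l with _ | ⟨y, rest⟩
    · simp at hx
    simp only [List.head?_cons, Option.some.injEq] at hx
    subst hx
    by_cases hmem : y ∈ rest
    · obtain ⟨r₁, r₂, rfl⟩ := List.append_of_mem hmem
      have hsuf : (y :: r₂) <:+ y :: (r₁ ++ y :: r₂) := ⟨y :: r₁, by simp⟩
      have hlen : (y :: r₂).length ≤ n := by
        simp only [List.length_cons, List.length_append] at hl ⊢
        omega
      obtain ⟨l', h1, h2, h3, h4, h5⟩ := IH (y :: r₂) hlen (hc.suffix hsuf) y rfl
      refine ⟨l', h1, h2, h3, ?_, fun u hu => (hsuf.subset (h5 u hu))⟩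
      rw [h4]
      exact (List.getLast?_append_cons (y :: r₁) y r₂).symm
    · cases rest with
      | nil => exact ⟨[y], by simp, List.isChain_singleton _, rfl, rfl, by simp⟩
      | cons z rest' =>
        have hlen : (z :: rest').length ≤ n := by
          simp only [List.length_cons] at hl ⊢; omega
        obtain ⟨l', h1, h2, h3, h4, h5⟩ := IH (z :: rest') hlen hc.tail z rfl
        have hln : l' ≠ [] := by
          intro h; rw [h] at h3; simp at h3
        refine ⟨y :: l', ?_, ?_, rfl, ?_, ?_⟩
        · exact List.nodup_cons.2 ⟨fun h => hmem (h5 y h), h1⟩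
        · refine List.isChain_cons.2 ⟨fun w hw => ?_, h2⟩
          rw [h3] at hw
          obtain rfl : w = z := by simpa using hw.symm
          exact (List.isChain_cons_cons.1 hc).1
        · rcases l' with _ | ⟨z', l''⟩
          · exact absurd rfl hln
          rw [List.getLast?_cons_cons, h4, List.getLast?_cons_cons]
        · intro u hu
          rcases List.mem_cons.1 hu with rfl | hu
          · exact List.mem_cons_self
          · exact List.mem_cons_of_mem _ (h5 u hu)

section Aux

variable {V : Type*} [Fintype V] [DecidableEq V] (G : MixedGraph V) (v : V) (A : Finset V)

private lemma flow_tail_decomp :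
    ∀ (Q : List (FlowNode1 V)), Q.Chain' (flowEdge1 G v A) → ∀ x, Q.head? = some (FlowNode1.R x) →
      Q.getLast? = some FlowNode1.t →
      ∃ rs : List V, rs.head? = some x ∧ rs.Chain' (fun a b => (a, b) ∈ G.D) ∧
        (∀ w ∈ rs.getLast?, w ∈ G.pa v) ∧ Q = rs.map FlowNode1.R ++ [FlowNode1.t] := by
  intro Q
  induction Q with
  | nil => intro _ x hx; simp at hx
  | cons z Q' IH =>
    intro hc x hx hlast
    obtain rfl : z = FlowNode1.R x := by simpa using hx
    cases Q' with
    | nil => simp at hlast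
    | cons z' Q2 =>
      have hedge : flowEdge1 G v A (FlowNode1.R x) z' := (List.isChain_cons_cons.1 hc).1
      cases z' with
      | s => exact hedge.elim
      | L a => exact hedge.elim
      | t =>
        cases Q2 with
        | nil =>
          refine ⟨[x], rfl, List.isChain_singleton _, by have h : x ∈ G.pa v := hedge; simpa using h, rfl⟩
        | cons z2 Q3 =>
          exact ((List.isChain_cons_cons.1 (List.isChain_cons_cons.1 hc).2).1).elim
      | R u =>
        have hD : (x, u) ∈ G.D := hedge
        have hlast' : (FlowNode1.R u :: Q2).getLast? = some FlowNode1.t := by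
          rwa [List.getLast?_cons_cons] at hlast
        obtain ⟨rs, hh, hch, hpa, hQ⟩ := IH (List.isChain_cons_cons.1 hc).2 u rfl hlast'
        have hrsn : rs ≠ [] := by intro h; rw [h] at hh; simp at hh
        refine ⟨x :: rs, rfl, ?_, ?_, by simp [hQ]⟩
        · refine List.isChain_cons.2 ⟨fun w hw => ?_, hch⟩
          rw [hh] at hw
          obtain rfl : w = u := by simpa using hw.symm
          exact hD
        · rcases rs with _ | ⟨r, rs'⟩
          · exact absurd rfl hrsn
          · rwa [List.getLast?_cons_cons]

private lemma flow_path_decomp (P : List (FlowNode1 V))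
    (hc : P.Chain' (flowEdge1 G v A)) (hh : P.head? = some FlowNode1.s)
    (hl : P.getLast? = some FlowNode1.t) (hlen : 2 ≤ P.length) :
    ∃ (a : V) (rs : List V) (x : V), a ∈ A ∧ rs.head? = some x ∧ (x = a ∨ (a, x) ∈ G.B) ∧
      rs.Chain' (fun a b => (a, b) ∈ G.D) ∧ (∀ w ∈ rs.getLast?, w ∈ G.pa v) ∧
      P = FlowNode1.s :: FlowNode1.L a :: rs.map FlowNode1.R ++ [FlowNode1.t] := by
  rcases P with _ | ⟨z, P₁⟩
  · simp at hh
  obtain rfl : z = FlowNode1.s := by simpa using hh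
  rcases P₁ with _ | ⟨z₁, P₂⟩
  · simp at hl
  have he1 : flowEdge1 G v A FlowNode1.s z₁ := (List.isChain_cons_cons.1 hc).1
  have hl1 : (z₁ :: P₂).getLast? = some FlowNode1.t := by
    rwa [List.getLast?_cons_cons] at hl
  cases z₁ with
  | s => exact he1.elim
  | t => exact he1.elim
  | R w => exact he1.elim
  | L a =>
    have haA : a ∈ A := he1
    rcases P₂ with _ | ⟨z₂, P₃⟩
    · simp at hl1
    have he2 : flowEdge1 G v A (FlowNode1.L a) z₂ := (List.isChain_cons_cons.1 (List.isChain_cons_cons.1 hc).2).1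
    cases z₂ with
    | s => exact he2.elim
    | t => exact he2.elim
    | L b => exact he2.elim
    | R x =>
      have hx : x = a ∨ (a, x) ∈ G.B := he2.2
      have hl2 : (FlowNode1.R x :: P₃).getLast? = some FlowNode1.t := by
        rwa [List.getLast?_cons_cons] at hl1
      obtain ⟨rs, h1, h2, h3, h4⟩ :=
        flow_tail_decomp G v A (FlowNode1.R x :: P₃)
          ((List.isChain_cons_cons.1 (List.isChain_cons_cons.1 hc).2).2) x rfl hl2
      exact ⟨a, rs, x, haA, h1, hx, h2, h3, by rw [h4]; simp⟩

private lemma interior_eq (a : V) (rs : List V) :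
    (((FlowNode1.s :: FlowNode1.L a :: rs.map FlowNode1.R ++ [FlowNode1.t] : List (FlowNode1 V)).drop 1).dropLast)
      = FlowNode1.L a :: rs.map FlowNode1.R := by
  show ((FlowNode1.L a :: rs.map FlowNode1.R) ++ [FlowNode1.t]).dropLast = _
  rw [List.dropLast_concat]

private lemma hasDisjointPaths_le (k : ℕ)
    (h : HasDisjointPaths (flowEdge1 G v A) FlowNode1.s FlowNode1.t k) :
    k ≤ (G.pa v).card := by
  obtain ⟨P, hP, hdisj⟩ := h
  have hdec := fun i => flow_path_decomp G v A (P i) (hP i).1 (hP i).2.1 (hP i).2.2.1 (hP i).2.2.2.1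
  choose a rs x haA hhead hx hch hpa hPeq using hdec
  have hrsn : ∀ i, rs i ≠ [] := fun i h => by
    have := hhead i; rw [h] at this; simp at this
  have hwpa : ∀ i, (rs i).getLast (hrsn i) ∈ G.pa v := fun i =>
    hpa i _ (by rw [List.getLast?_eq_getLast (hrsn i)]; exact rfl)
  have hint : ∀ i, ((P i).drop 1).dropLast = FlowNode1.L (a i) :: (rs i).map FlowNode1.R := by
    intro i; rw [hPeq i]; exact interior_eq _ _
  have hwinj : ∀ i j, (rs i).getLast (hrsn i) = (rs j).getLast (hrsn j) → i = j := by
    intro i j hij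
    by_contra hne
    have h1 : FlowNode1.R ((rs i).getLast (hrsn i)) ∈ ((P i).drop 1).dropLast := by
      rw [hint i]
      exact List.mem_cons_of_mem _ (List.mem_map_of_mem ((rs i).getLast_mem (hrsn i)))
    have h2 : FlowNode1.R ((rs j).getLast (hrsn j)) ∈ ((P j).drop 1).dropLast := by
      rw [hint j]
      exact List.mem_cons_of_mem _ (List.mem_map_of_mem ((rs j).getLast_mem (hrsn j)))
    exact (hdisj i j hne _ h1) (hij ▸ h2)
  calc k = Fintype.card (Fin k) := (Fintype.card_fin k).symm
    _ ≤ Fintype.card {y // y ∈ G.pa v} :=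
        Fintype.card_le_of_injective (fun i => ⟨(rs i).getLast (hrsn i), hwpa i⟩)
          (fun i j hij => hwinj i j (by simpa using hij))
    _ = (G.pa v).card := Fintype.card_coe _

private lemma trek_left_singleton (π : G.Trek) (h : π.IsHalfTrek) :
    π.left = [π.source] := by
  obtain ⟨c, hc⟩ := Finset.card_eq_one.1 h
  have hall : ∀ u ∈ π.left, u = c := by
    intro u hu
    have : u ∈ π.left.toFinset := List.mem_toFinset.2 hu
    rw [show π.left.toFinset = π.leftSet from rfl, hc] at this
    simpa using this
  have hne := π.left_ne
  have hch := π.left_chain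
  rcases hl : π.left with _ | ⟨b, l⟩
  · exact absurd hl hne
  rcases l with _ | ⟨b₂, l₂⟩
  · have : π.source = b := by
      simp [MixedGraph.Trek.source, hl]
    rw [this]
  · exfalso
    rw [hl] at hch
    have h1 : b = c := hall b (by rw [hl]; simp)
    have h2 : b₂ = c := hall b₂ (by rw [hl]; simp)
    have : (b, b₂) ∈ G.D := (List.isChain_cons_cons.1 hch).1
    rw [h1, h2] at this
    exact G.D_irrefl c this

private lemma flow_of_htc (Y : Finset V) (hYA : Y ⊆ A) (hY : G.SatisfiesHTC v Y) :
    HasDisjointPaths (flowEdge1 G v A) FlowNode1.s FlowNode1.t (G.pa v).card := by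
  classical
  obtain ⟨hcard, hcnd, f, hhalf, ⟨hsrc, himg, htgt⟩, hnsi⟩ := hY
  set k := (G.pa v).card with hk
  let e : Fin k → {z // z ∈ Y} := fun i => Y.equivFin.symm (Fin.cast hcard.symm i)
  let y : Fin k → V := fun i => (e i : V)
  have hyY : ∀ i, y i ∈ Y := fun i => (e i).2
  have hyinj : ∀ i j : Fin k, y i = y j → i = j := by
    intro i j h
    have h2 := Y.equivFin.symm.injective (Subtype.ext h)
    exact Fin.ext (by simpa using congrArg Fin.val h2)
  have hleft : ∀ i, (f (y i)).left = [y i] := by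
    intro i
    rw [trek_left_singleton G (f (y i)) (hhalf _ (hyY i)), hsrc _ (hyY i)]
  have htarpa : ∀ i, (f (y i)).target ∈ G.pa v := by
    intro i
    rw [← himg]
    exact Finset.mem_image_of_mem _ (hyY i)
  have hdedup : ∀ i, ∃ l' : List V, l'.Nodup ∧ l'.Chain' (fun a b => (a, b) ∈ G.D) ∧
      l'.head? = some ((f (y i)).right.head (f (y i)).right_ne) ∧
      l'.getLast? = (f (y i)).right.getLast? ∧ ∀ u ∈ l', u ∈ (f (y i)).right := by
    intro i
    exact exists_nodup_chain' (f (y i)).right.length (f (y i)).right le_rfl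
      (f (y i)).right_chain _ (List.head?_eq_head _)
  choose rs hnodup hchain hhead hlastq hsub using hdedup
  have hrsn : ∀ i, rs i ≠ [] := fun i h => by
    have := hhead i; rw [h] at this; simp at this
  have hlast : ∀ i, (rs i).getLast (hrsn i) = (f (y i)).target := by
    intro i
    have h1 : (rs i).getLast? = some ((rs i).getLast (hrsn i)) :=
      List.getLast?_eq_getLast (hrsn i)
    have h2 : (f (y i)).right.getLast? = some ((f (y i)).target) :=
      List.getLast?_eq_getLast (f (y i)).right_ne
    have h3 := (h1.symm.trans (hlastq i)).trans h2
    simpa using h3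
  have hheadcond : ∀ i, (rs i).head (hrsn i) = y i ∨ (y i, (rs i).head (hrsn i)) ∈ G.B := by
    intro i
    have hh : (rs i).head (hrsn i) = (f (y i)).right.head (f (y i)).right_ne := by
      have h4 := hhead i
      rw [List.head?_eq_head (hrsn i)] at h4
      simpa using h4
    have hhc := (f (y i)).head_cond
    have hlh : (f (y i)).left.head (f (y i)).left_ne = y i := by
      simp [hleft i]
    cases hb : (f (y i)).hasBidir with
    | false =>
      rw [hb] at hhc
      simp only [Bool.false_eq_true, if_false] at hhc
      left; rw [hh, ← hhc]; exact hlh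
    | true =>
      rw [hb] at hhc
      simp only [if_true] at hhc
      rw [hlh] at hhc
      right; rw [hh]; exact hhc
  let P : Fin k → List (FlowNode1 V) := fun i =>
    FlowNode1.s :: FlowNode1.L (y i) :: (rs i).map FlowNode1.R ++ [FlowNode1.t]
  have hint : ∀ i, ((P i).drop 1).dropLast = FlowNode1.L (y i) :: (rs i).map FlowNode1.R :=
    fun i => interior_eq _ _
  have hh2 : ∀ i, ((rs i).map FlowNode1.R ++ [FlowNode1.t]).head?
      = some (FlowNode1.R ((rs i).head (hrsn i))) := by
    intro i
    rw [List.head?_append, List.head?_map, List.head?_eq_head (hrsn i)]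
    rfl
  refine ⟨P, fun i => ⟨?_, rfl, ?_, by simp [P], ?_⟩, ?_⟩
  · -- chain
    refine List.isChain_cons.2 ⟨fun z hz => ?_, List.isChain_cons.2 ⟨fun z hz => ?_, ?_⟩⟩
    · obtain rfl : FlowNode1.L (y i) = z := by simpa using hz
      exact hYA (hyY i)
    · rw [List.append_eq, hh2 i] at hz
      obtain rfl : FlowNode1.R ((rs i).head (hrsn i)) = z := by simpa using hz
      exact ⟨hYA (hyY i), hheadcond i⟩
    · refine List.isChain_append.2 ⟨?_, by simp, fun p hp q hq => ?_⟩
      · exact List.isChain_map_of_isChain FlowNode1.R (fun a b hab => hab) (hchain i)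
      · obtain rfl : FlowNode1.t = q := by simpa using hq
        rw [List.getLast?_map, List.getLast?_eq_getLast (hrsn i)] at hp
        obtain rfl : FlowNode1.R ((rs i).getLast (hrsn i)) = p := by simpa using hp
        show (rs i).getLast (hrsn i) ∈ G.pa v
        rw [hlast i]
        exact htarpa i
  · -- getLast?
    show (FlowNode1.s :: FlowNode1.L (y i) :: ((rs i).map FlowNode1.R ++ [FlowNode1.t])).getLast?
      = some FlowNode1.t
    rw [List.getLast?_cons_cons, List.getLast?_cons, List.getLast?_append]
    rfl
  · -- nodup
    have h1 : ((rs i).map FlowNode1.R).Nodup :=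
      (hnodup i).map (fun a b h => FlowNode1.R.inj h)
    show (FlowNode1.s :: FlowNode1.L (y i) :: ((rs i).map FlowNode1.R ++ [FlowNode1.t])).Nodup
    rw [List.nodup_cons, List.nodup_cons]
    refine ⟨by simp, by simp, ?_⟩
    refine List.Nodup.append h1 (by simp) ?_
    intro z hz1 hz2
    obtain ⟨u, _, rfl⟩ := List.mem_map.1 hz1
    simp at hz2
  · -- disjoint interiors
    intro i j hij z hzi hzj
    rw [hint i] at hzi
    rw [hint j] at hzj
    have hyij : y i ≠ y j := fun h => hij (hyinj i j h)
    rcases List.mem_cons.1 hzi with rfl | hzi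
    · rcases List.mem_cons.1 hzj with h | h
      · exact hyij (FlowNode1.L.inj h)
      · obtain ⟨u, _, hu⟩ := List.mem_map.1 h
        cases hu
    · obtain ⟨u, hui, rfl⟩ := List.mem_map.1 hzi
      rcases List.mem_cons.1 hzj with h | h
      · cases h
      · obtain ⟨u', huj, hu'⟩ := List.mem_map.1 h
        rw [FlowNode1.R.inj hu'] at huj
        have hdis := (hnsi (y i) (hyY i) (y j) (hyY j) hyij).2
        have hm1 : u ∈ (f (y i)).rightSet := List.mem_toFinset.2 (hsub i u hui)
        have hm2 : u ∈ (f (y j)).rightSet := List.mem_toFinset.2 (hsub j u huj)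
        exact Finset.disjoint_left.1 hdis hm1 hm2

private lemma htc_of_flow (hA : ∀ a ∈ A, a ≠ v ∧ a ∉ G.sib v)
    (h : HasDisjointPaths (flowEdge1 G v A) FlowNode1.s FlowNode1.t (G.pa v).card) :
    ∃ Y ⊆ A, G.SatisfiesHTC v Y := by
  classical
  obtain ⟨P, hP, hdisj⟩ := h
  have hdec := fun i => flow_path_decomp G v A (P i) (hP i).1 (hP i).2.1 (hP i).2.2.1 (hP i).2.2.2.1
  choose a rs x haA hhead hx hch hpa hPeq using hdec
  have hrsn : ∀ i, rs i ≠ [] := fun i h => by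
    have := hhead i; rw [h] at this; simp at this
  have hint : ∀ i, ((P i).drop 1).dropLast = FlowNode1.L (a i) :: (rs i).map FlowNode1.R := by
    intro i; rw [hPeq i]; exact interior_eq _ _
  have hainj : ∀ i j, a i = a j → i = j := by
    intro i j hij
    by_contra hne
    have h1 : FlowNode1.L (a i) ∈ ((P i).drop 1).dropLast := by
      rw [hint i]; exact List.mem_cons_self
    have h2 : FlowNode1.L (a j) ∈ ((P j).drop 1).dropLast := by
      rw [hint j]; exact List.mem_cons_self
    exact (hdisj i j hne _ h1) (hij ▸ h2)
  have hwpa : ∀ i, (rs i).getLast (hrsn i) ∈ G.pa v := fun i =>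
    hpa i _ (by rw [List.getLast?_eq_getLast (hrsn i)]; exact rfl)
  have hwinj : ∀ i j, (rs i).getLast (hrsn i) = (rs j).getLast (hrsn j) → i = j := by
    intro i j hij
    by_contra hne
    have h1 : FlowNode1.R ((rs i).getLast (hrsn i)) ∈ ((P i).drop 1).dropLast := by
      rw [hint i]
      exact List.mem_cons_of_mem _ (List.mem_map_of_mem ((rs i).getLast_mem (hrsn i)))
    have h2 : FlowNode1.R ((rs j).getLast (hrsn j)) ∈ ((P j).drop 1).dropLast := by
      rw [hint j]
      exact List.mem_cons_of_mem _ (List.mem_map_of_mem ((rs j).getLast_mem (hrsn j)))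
    exact (hdisj i j hne _ h1) (hij ▸ h2)
  have hrdisj : ∀ i j, i ≠ j → ∀ u, u ∈ rs i → u ∉ rs j := by
    intro i j hne u hui huj
    have h1 : FlowNode1.R u ∈ ((P i).drop 1).dropLast := by
      rw [hint i]; exact List.mem_cons_of_mem _ (List.mem_map_of_mem hui)
    have h2 : FlowNode1.R u ∈ ((P j).drop 1).dropLast := by
      rw [hint j]; exact List.mem_cons_of_mem _ (List.mem_map_of_mem huj)
    exact (hdisj i j hne _ h1) h2
  have hxhead : ∀ i, (rs i).head (hrsn i) = x i := by
    intro i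
    have := hhead i
    rw [List.head?_eq_head (hrsn i)] at this
    simpa using this
  let τ : Fin ((G.pa v).card) → G.Trek := fun i =>
    { left := [a i]
      right := rs i
      left_ne := by simp
      right_ne := hrsn i
      hasBidir := if x i = a i then false else true
      left_chain := List.isChain_singleton _
      right_chain := hch i
      head_cond := by
        by_cases hxa : x i = a i
        · rw [if_pos hxa]
          simp only [Bool.false_eq_true, if_false, List.head_cons]
          rw [hxhead i, hxa]
        · rw [if_neg hxa]
          simp only [if_true, List.head_cons]
          rw [hxhead i]
          rcases hx i with h | h
          · exact absurd h hxa
          · exact h }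
  have hsrcτ : ∀ i, (τ i).source = a i := fun i => rfl
  have htgtτ : ∀ i, (τ i).target = (rs i).getLast (hrsn i) := fun i => rfl
  let Y : Finset V := Finset.image a Finset.univ
  have hYmem : ∀ z, z ∈ Y ↔ ∃ i, a i = z := by
    intro z; simp [Y]
  have hYA : Y ⊆ A := by
    intro z hz
    obtain ⟨i, rfl⟩ := (hYmem z).1 hz
    exact haA i
  have hYcard : Y.card = (G.pa v).card := by
    rw [Finset.card_image_of_injective _ (fun i j hij => hainj i j hij)]
    simp
  let d : G.Trek := ⟨[v], [v], by simp, by simp, false, List.isChain_singleton _, List.isChain_singleton _, by simp⟩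
  let f : V → G.Trek := fun z => if h : ∃ i, a i = z then τ h.choose else d
  have hf : ∀ i, f (a i) = τ i := by
    intro i
    have hex : ∃ j, a j = a i := ⟨i, rfl⟩
    show (if h : ∃ j, a j = a i then τ h.choose else d) = τ i
    rw [dif_pos hex]
    rw [hainj _ _ hex.choose_spec]
  refine ⟨Y, hYA, hYcard, fun z hz => hA z (hYA hz), f, ?_, ⟨?_, ?_, ?_⟩, ?_⟩
  · -- half treks
    intro z hz
    obtain ⟨i, rfl⟩ := (hYmem z).1 hz
    rw [hf i]
    show ([a i].toFinset).card = 1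
    simp
  · -- sources
    intro z hz
    obtain ⟨i, rfl⟩ := (hYmem z).1 hz
    rw [hf i]
    exact hsrcτ i
  · -- image of targets
    have himg : Finset.image (fun z => (f z).target) Y
        = Finset.image (fun i => (rs i).getLast (hrsn i)) Finset.univ := by
      rw [show Y = Finset.image a Finset.univ from rfl, Finset.image_image]
      refine Finset.image_congr ?_
      intro i _
      show (f (a i)).target = _
      rw [hf i]
      exact htgtτ i
    rw [himg]
    refine Finset.eq_of_subset_of_card_le ?_ ?_
    · intro w hw
      obtain ⟨i, _, rfl⟩ := Finset.mem_image.1 hw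
      exact hwpa i
    · rw [Finset.card_image_of_injective _ (fun i j hij => hwinj i j hij)]
      simp
  · -- distinct targets
    intro z hz z' hz' hne
    obtain ⟨i, rfl⟩ := (hYmem z).1 hz
    obtain ⟨j, rfl⟩ := (hYmem z').1 hz'
    rw [hf i, hf j, htgtτ i, htgtτ j]
    intro heq
    exact hne (congrArg a (hwinj i j heq))
  · -- no sided intersection
    intro z hz z' hz' hne
    obtain ⟨i, rfl⟩ := (hYmem z).1 hz
    obtain ⟨j, rfl⟩ := (hYmem z').1 hz'
    have hij : i ≠ j := fun h => hne (congrArg a h)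
    rw [hf i, hf j]
    constructor
    · show Disjoint ([a i].toFinset) ([a j].toFinset)
      simp only [List.toFinset_cons, List.toFinset_nil, LawfulSingleton.insert_empty_eq]
      rw [Finset.disjoint_singleton]
      exact hne
    · show Disjoint ((rs i).toFinset) ((rs j).toFinset)
      rw [Finset.disjoint_left]
      intro u hu1 hu2
      exact hrdisj i j hij u (List.mem_toFinset.1 hu1) (List.mem_toFinset.1 hu2)

end Aux

/-- There is a set `Y ⊆ A` satisfying the half-trek criterion with respect to `v` if and
only if the maximum number of directed `s`–`t` paths in `G_flow(v, A)` that are pairwise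
vertex-disjoint except at `s` and `t` equals `|pa(v)|`. -/
theorem htc_maxflow {V : Type*} [Fintype V] [DecidableEq V] (G : MixedGraph V)
    (v : V) (A : Finset V) (hA : ∀ a ∈ A, a ≠ v ∧ a ∉ G.sib v) :
    (∃ Y ⊆ A, G.SatisfiesHTC v Y) ↔
      (HasDisjointPaths (flowEdge1 G v A) FlowNode1.s FlowNode1.t (G.pa v).card ∧
        ∀ k, HasDisjointPaths (flowEdge1 G v A) FlowNode1.s FlowNode1.t k →
          k ≤ (G.pa v).card) := by
  constructor
  · rintro ⟨Y, hYA, hY⟩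
    exact ⟨flow_of_htc G v A Y hYA hY, fun k hk => hasDisjointPaths_le G v A k hk⟩
  · rintro ⟨h, -⟩
    exact htc_of_flow G v A hA h
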